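/- Let (Ω, 𝓔, μ) be a complete σ-finite measure space, H a separable complex Hilbert space, and T : Ω → (H →L[ℂ] H) a random bounded operator, i.e. ω ↦ T ω f is measurable for every f ∈ H. Then for every open set U ⊆ ℂ the set {ω ∈ Ω | (spectrum ℂ (T ω) ∩ U).Nonempty} belongs to 𝓔. In other words, the spectrum of a random bounded operator is a random set. -/

import Mathlib

open MeasureTheory ContinuousLinearMap

namespace RandomSpectrumAux

set_option linter.unusedSectionVars false

variable {H : Type*} [NormedAddCommGroup H] [InnerProductSpace ℂ H] [CompleteSpace H]

theorem isUnit_of_bounded_below (B : H →L[ℂ] H) {c : ℝ} (hc : 0 < c)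
    (h1 : ∀ f, c * ‖f‖ ≤ ‖B f‖) (h2 : ∀ f, c * ‖f‖ ≤ ‖adjoint B f‖) : IsUnit B := by
  have hanti : AntilipschitzWith (⟨c, hc.le⟩ : NNReal)⁻¹ B := by
    apply ContinuousLinearMap.antilipschitz_of_bound
    intro x
    show ‖x‖ ≤ c⁻¹ * ‖B x‖
    rw [inv_mul_eq_div, le_div_iff₀ (by exact_mod_cast hc)]
    simpa [mul_comm] using h1 x
  have hinj : Function.Injective B := hanti.injective
  have hker : B.ker = ⊥ := LinearMap.ker_eq_bot.2 hinj
  have hclosed : IsClosed (B.range : Set H) := by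
    exact hanti.isClosed_range B.uniformContinuous
  have hw0 : ∀ w ∈ (B.range)ᗮ, w = 0 := by
    intro w hw
    have ha : adjoint B w = 0 := by
      apply ext_inner_right ℂ
      intro x
      rw [adjoint_inner_left, inner_zero_left]
      have h0 : (inner ℂ (B x) w : ℂ) = 0 := hw _ ⟨x, rfl⟩
      rw [← inner_conj_symm, h0, map_zero]
    have h2' : c * ‖w‖ ≤ 0 := by simpa [ha] using h2 w
    have : ‖w‖ ≤ 0 := nonpos_of_mul_nonpos_right (by linarith [h2']) hc
    exact norm_eq_zero.1 (le_antisymm this (norm_nonneg w))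
  have hrange : B.range = ⊤ := by
    haveI := hclosed.completeSpace_coe
    rw [← (B.range).orthogonal_orthogonal, Submodule.eq_top_iff']
    intro v
    rw [Submodule.mem_orthogonal]
    intro w hw
    rw [hw0 w hw, inner_zero_left]
  let e : H ≃L[ℂ] H := ContinuousLinearEquiv.ofBijective B hker hrange
  have heB : (e : H →L[ℂ] H) = B := rfl
  refine isUnit_iff_exists.2 ⟨e.symm.toContinuousLinearMap, ?_, ?_⟩ <;>
    · ext f
      simp only [ContinuousLinearMap.mul_apply, ContinuousLinearMap.coe_coe, ← heB,
        ContinuousLinearEquiv.coe_coe, ContinuousLinearMap.one_apply]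
      first
        | exact e.apply_symm_apply f
        | exact e.symm_apply_apply f

theorem exists_dense_sphere_seq [SecondCountableTopology H] [Nontrivial H] :
    ∃ u : ℕ → H, (∀ k, ‖u k‖ = 1) ∧
      ∀ f : H, ‖f‖ = 1 → ∀ ε > 0, ∃ k, ‖u k - f‖ < ε := by
  obtain ⟨v, hv⟩ := exists_ne (0 : H)
  haveI : Nonempty H := ⟨0⟩
  set e := TopologicalSpace.denseSeq H with he
  have hde : DenseRange e := TopologicalSpace.denseRange_denseSeq H
  classical
  refine ⟨fun k => if h : e k = 0 then ‖v‖⁻¹ • v else ‖e k‖⁻¹ • e k, ?_, ?_⟩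
  · intro k
    by_cases h : e k = 0 <;>
      simp [h, norm_smul, abs_of_nonneg, inv_mul_cancel₀, norm_ne_zero_iff.2, hv]
  · intro f hf ε hε
    set δ := min (ε / 3) (1 / 2) with hδ
    have hδ0 : 0 < δ := by positivity
    obtain ⟨k, hk⟩ := hde.exists_dist_lt f hδ0
    have hdist : ‖e k - f‖ < δ := by rw [← dist_eq_norm, dist_comm]; exact hk
    have hek : e k ≠ 0 := by
      intro h0
      rw [h0] at hdist
      simp only [zero_sub, norm_neg, hf] at hdist
      have : δ ≤ 1 / 2 := min_le_right _ _
      linarith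
    refine ⟨k, ?_⟩
    simp only [dif_neg hek]
    have hn : |1 - ‖e k‖| ≤ ‖e k - f‖ := by
      have h1 : |‖f‖ - ‖e k‖| ≤ ‖f - e k‖ := abs_norm_sub_norm_le f (e k)
      rw [hf, norm_sub_rev] at h1
      exact h1
    have hstep : ‖‖e k‖⁻¹ • e k - e k‖ = |1 - ‖e k‖| := by
      have : ‖e k‖⁻¹ • e k - e k = (‖e k‖⁻¹ - 1) • e k := by
        rw [sub_smul, one_smul]
      rw [this, norm_smul, Real.norm_eq_abs, ← abs_of_nonneg (norm_nonneg (e k)), ← abs_mul,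
        sub_mul, abs_of_nonneg (norm_nonneg (e k)),
        inv_mul_cancel₀ (norm_ne_zero_iff.2 hek), one_mul, abs_sub_comm]
    calc ‖‖e k‖⁻¹ • e k - f‖ ≤ ‖‖e k‖⁻¹ • e k - e k‖ + ‖e k - f‖ :=
      norm_sub_le_norm_sub_add_norm_sub _ _ _
    _ = |1 - ‖e k‖| + ‖e k - f‖ := by rw [hstep]
    _ ≤ ‖e k - f‖ + ‖e k - f‖ := by linarith [hn]
    _ < δ + δ := by linarith [hdist]
    _ ≤ ε / 3 + ε / 3 := by apply add_le_add <;> exact min_le_left _ _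
    _ < ε := by linarith

noncomputable def lowNorm (u : ℕ → H) (B : H →L[ℂ] H) : ℝ := ⨅ k, ‖B (u k)‖

noncomputable def nuf (u : ℕ → H) (A : H →L[ℂ] H) (z : ℂ) : ℝ :=
  min (lowNorm u (algebraMap ℂ (H →L[ℂ] H) z - A))
      (lowNorm u (star (algebraMap ℂ (H →L[ℂ] H) z - A)))

theorem lowNorm_bdd (u : ℕ → H) (B : H →L[ℂ] H) :
    BddBelow (Set.range fun k => ‖B (u k)‖) := ⟨0, by rintro x ⟨k, rfl⟩; exact norm_nonneg _⟩

theorem lowNorm_le (u : ℕ → H) (B : H →L[ℂ] H) (k : ℕ) : lowNorm u B ≤ ‖B (u k)‖ :=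
  ciInf_le (lowNorm_bdd u B) k

theorem le_lowNorm (u : ℕ → H) (B : H →L[ℂ] H) {c : ℝ} (h : ∀ k, c ≤ ‖B (u k)‖) :
    c ≤ lowNorm u B := le_ciInf h

theorem lowNorm_nonneg (u : ℕ → H) (B : H →L[ℂ] H) : 0 ≤ lowNorm u B :=
  le_lowNorm u B fun _ => norm_nonneg _

theorem nuf_nonneg (u : ℕ → H) (A : H →L[ℂ] H) (z : ℂ) : 0 ≤ nuf u A z :=
  le_min (lowNorm_nonneg _ _) (lowNorm_nonneg _ _)

theorem lowNorm_bound (u : ℕ → H) (hu1 : ∀ k, ‖u k‖ = 1)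
    (hud : ∀ f : H, ‖f‖ = 1 → ∀ ε > 0, ∃ k, ‖u k - f‖ < ε)
    (B : H →L[ℂ] H) : ∀ f, lowNorm u B * ‖f‖ ≤ ‖B f‖ := by
  have key : ∀ f, ‖f‖ = 1 → lowNorm u B ≤ ‖B f‖ := by
    intro f hf
    refine le_of_forall_pos_le_add fun ε hε => ?_
    have hB1 : (0:ℝ) < ‖B‖ + 1 := by positivity
    obtain ⟨k, hk⟩ := hud f hf (ε / (‖B‖ + 1)) (by positivity)
    calc lowNorm u B ≤ ‖B (u k)‖ := lowNorm_le u B k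
    _ ≤ ‖B f‖ + ‖B (u k) - B f‖ := by
        have := norm_sub_norm_le (B (u k)) (B f); linarith [this]
    _ = ‖B f‖ + ‖B (u k - f)‖ := by rw [map_sub]
    _ ≤ ‖B f‖ + ‖B‖ * (ε / (‖B‖ + 1)) := by
        have := B.le_opNorm (u k - f)
        have h2 : ‖B‖ * ‖u k - f‖ ≤ ‖B‖ * (ε / (‖B‖ + 1)) :=
          mul_le_mul_of_nonneg_left hk.le (norm_nonneg B)
        linarith
    _ ≤ ‖B f‖ + ε := by
        have : ‖B‖ * (ε / (‖B‖ + 1)) ≤ ε := by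
          rw [mul_div_assoc', div_le_iff₀ hB1]
          nlinarith [norm_nonneg B, hε.le]
        linarith
  intro f
  rcases eq_or_ne f 0 with rfl | hf
  · simp
  · have hnf : (0:ℝ) < ‖f‖ := norm_pos_iff.2 hf
    have hg : ‖(‖f‖⁻¹ • f : H)‖ = 1 := by
      rw [norm_smul, norm_inv, norm_norm, inv_mul_cancel₀ hnf.ne']
    have := key _ hg
    rw [map_smul_of_tower, norm_smul, norm_inv, norm_norm] at this
    rw [mul_comm]
    calc ‖f‖ * lowNorm u B ≤ ‖f‖ * (‖f‖⁻¹ * ‖B f‖) :=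
      mul_le_mul_of_nonneg_left this hnf.le
    _ = ‖B f‖ := by field_simp

theorem lowNorm_pos_of_isUnit [Nontrivial H] (u : ℕ → H) (hu1 : ∀ k, ‖u k‖ = 1)
    {B : H →L[ℂ] H} (hB : IsUnit B) : 0 < lowNorm u B := by
  obtain ⟨w, rfl⟩ := hB
  set V : H →L[ℂ] H := ↑w⁻¹ with hV
  have hVinv : ∀ f, V ((w : H →L[ℂ] H) f) = f := by
    intro f
    have h := DFunLike.congr_fun (w.inv_mul) f
    rw [ContinuousLinearMap.mul_apply, ContinuousLinearMap.one_apply] at h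
    exact h
  have hVne : V ≠ 0 := by
    intro h0
    obtain ⟨f, hf⟩ := exists_ne (0 : H)
    have := hVinv f
    rw [h0] at this
    simp at this
    exact hf this.symm
  have hVpos : 0 < ‖V‖ := norm_pos_iff.2 hVne
  refine lt_of_lt_of_le (show (0:ℝ) < ‖V‖⁻¹ by positivity) (le_lowNorm u _ fun k => ?_)
  have h1 : ‖u k‖ ≤ ‖V‖ * ‖(w : H →L[ℂ] H) (u k)‖ := by
    calc ‖u k‖ = ‖V ((w : H →L[ℂ] H) (u k))‖ := by rw [hVinv]
    _ ≤ ‖V‖ * ‖(w : H →L[ℂ] H) (u k)‖ := V.le_opNorm _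
  rw [hu1 k] at h1
  rw [inv_le_iff_one_le_mul₀' hVpos]
  linarith

theorem star_algebraMap_sub (A : H →L[ℂ] H) (z : ℂ) :
    star (algebraMap ℂ (H →L[ℂ] H) z - A) =
      algebraMap ℂ (H →L[ℂ] H) (starRingEnd ℂ z) - star A := by
  rw [star_sub]
  congr 1
  rw [Algebra.algebraMap_eq_smul_one, Algebra.algebraMap_eq_smul_one, star_smul, star_one]
  rfl

theorem algebraMap_apply' (z : ℂ) (f : H) : (algebraMap ℂ (H →L[ℂ] H) z) f = z • f := by
  rw [Algebra.algebraMap_eq_smul_one]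
  simp

theorem lowNorm_lipschitz (u : ℕ → H) (hu1 : ∀ k, ‖u k‖ = 1) (B C : H →L[ℂ] H) :
    lowNorm u B ≤ lowNorm u C + ‖B - C‖ := by
  have h : lowNorm u B - ‖B - C‖ ≤ lowNorm u C := by
    apply le_lowNorm
    intro k
    have h1 : ‖B (u k)‖ ≤ ‖C (u k)‖ + ‖B - C‖ := by
      have h2 : ‖B (u k) - C (u k)‖ ≤ ‖B - C‖ := by
        have := (B - C).le_opNorm (u k)
        rwa [ContinuousLinearMap.sub_apply, hu1 k, mul_one] at this
      have := norm_sub_norm_le (B (u k)) (C (u k))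
      linarith
    have := lowNorm_le u B k
    linarith
  linarith

theorem lowNorm_ge (u : ℕ → H) (hu1 : ∀ k, ‖u k‖ = 1) (C : H →L[ℂ] H) (z : ℂ) :
    ‖z‖ - ‖C‖ ≤ lowNorm u (algebraMap ℂ (H →L[ℂ] H) z - C) := by
  apply le_lowNorm
  intro k
  rw [ContinuousLinearMap.sub_apply, algebraMap_apply']
  have h1 : ‖C (u k)‖ ≤ ‖C‖ := by
    have := C.le_opNorm (u k); rwa [hu1 k, mul_one] at this
  have h2 : ‖z • u k‖ = ‖z‖ := by rw [norm_smul, hu1 k, mul_one]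
  have := norm_sub_norm_le (z • u k) (C (u k))
  linarith

theorem nuf_eq_zero_iff [Nontrivial H] (u : ℕ → H) (hu1 : ∀ k, ‖u k‖ = 1)
    (hud : ∀ f : H, ‖f‖ = 1 → ∀ ε > 0, ∃ k, ‖u k - f‖ < ε)
    (A : H →L[ℂ] H) (z : ℂ) : nuf u A z = 0 ↔ z ∈ spectrum ℂ A := by
  rw [spectrum.mem_iff]
  set B := algebraMap ℂ (H →L[ℂ] H) z - A with hB
  constructor
  · intro h hunit
    have h1 : 0 < lowNorm u B := lowNorm_pos_of_isUnit u hu1 hunit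
    have h2 : 0 < lowNorm u (star B) := lowNorm_pos_of_isUnit u hu1 hunit.star
    have : 0 < nuf u A z := lt_min h1 h2
    rw [h] at this
    exact lt_irrefl 0 this
  · intro hns
    by_contra hne
    have hpos : 0 < nuf u A z := lt_of_le_of_ne (nuf_nonneg u A z) (Ne.symm hne)
    apply hns
    refine isUnit_of_bounded_below B hpos ?_ ?_
    · intro f
      calc nuf u A z * ‖f‖ ≤ lowNorm u B * ‖f‖ :=
        mul_le_mul_of_nonneg_right (min_le_left _ _) (norm_nonneg f)
      _ ≤ ‖B f‖ := lowNorm_bound u hu1 hud B f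
    · intro f
      rw [← star_eq_adjoint]
      calc nuf u A z * ‖f‖ ≤ lowNorm u (star B) * ‖f‖ :=
        mul_le_mul_of_nonneg_right (min_le_right _ _) (norm_nonneg f)
      _ ≤ ‖(star B) f‖ := lowNorm_bound u hu1 hud (star B) f

theorem nuf_lipschitz (u : ℕ → H) (hu1 : ∀ k, ‖u k‖ = 1) (A : H →L[ℂ] H) (z w : ℂ) :
    nuf u A z ≤ nuf u A w + dist z w := by
  set Bz := algebraMap ℂ (H →L[ℂ] H) z - A with hBz
  set Bw := algebraMap ℂ (H →L[ℂ] H) w - A with hBw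
  have hsub : Bz - Bw = algebraMap ℂ (H →L[ℂ] H) (z - w) := by
    rw [hBz, hBw, map_sub]
    abel
  have hnorm : ‖Bz - Bw‖ ≤ dist z w := by
    rw [hsub, Complex.dist_eq, Algebra.algebraMap_eq_smul_one, norm_smul]
    calc ‖z - w‖ * ‖(1 : H →L[ℂ] H)‖ ≤ ‖z - w‖ * 1 :=
      mul_le_mul_of_nonneg_left ContinuousLinearMap.norm_id_le (by positivity)
    _ = ‖z - w‖ := mul_one _
  have hsubs : star Bz - star Bw = star (Bz - Bw) := (star_sub Bz Bw).symm
  have hnorms : ‖star Bz - star Bw‖ ≤ dist z w := by rw [hsubs, norm_star]; exact hnorm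
  have l1 : lowNorm u Bz ≤ lowNorm u Bw + dist z w := by
    calc lowNorm u Bz ≤ lowNorm u Bw + ‖Bz - Bw‖ := lowNorm_lipschitz u hu1 Bz Bw
    _ ≤ lowNorm u Bw + dist z w := by linarith
  have l2 : lowNorm u (star Bz) ≤ lowNorm u (star Bw) + dist z w := by
    calc lowNorm u (star Bz) ≤ lowNorm u (star Bw) + ‖star Bz - star Bw‖ :=
      lowNorm_lipschitz u hu1 _ _
    _ ≤ lowNorm u (star Bw) + dist z w := by linarith
  rcases min_cases (lowNorm u Bw) (lowNorm u (star Bw)) with ⟨hmin, _⟩ | ⟨hmin, _⟩ <;>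
    · unfold nuf
      rw [hmin]
      first
        | exact le_trans (min_le_left _ _) l1
        | exact le_trans (min_le_right _ _) l2

theorem nuf_ge (u : ℕ → H) (hu1 : ∀ k, ‖u k‖ = 1) (A : H →L[ℂ] H) (z : ℂ) :
    ‖z‖ - ‖A‖ ≤ nuf u A z := by
  apply le_min
  · exact lowNorm_ge u hu1 A z
  · rw [star_algebraMap_sub]
    have := lowNorm_ge u hu1 (star A) (starRingEnd ℂ z)
    rw [norm_star] at this
    calc ‖z‖ - ‖A‖ = ‖starRingEnd ℂ z‖ - ‖A‖ := by rw [RCLike.norm_conj]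
    _ ≤ _ := this

theorem norm_eq_ciSup (u : ℕ → H) (hu1 : ∀ k, ‖u k‖ = 1)
    (hud : ∀ f : H, ‖f‖ = 1 → ∀ ε > 0, ∃ k, ‖u k - f‖ < ε) (x : H) :
    ‖x‖ = ⨆ k, ‖(inner ℂ (u k) x : ℂ)‖ := by
  have hbdd : BddAbove (Set.range fun k => ‖(inner ℂ (u k) x : ℂ)‖) := by
    refine ⟨‖x‖, ?_⟩
    rintro y ⟨k, rfl⟩
    calc ‖(inner ℂ (u k) x : ℂ)‖ ≤ ‖u k‖ * ‖x‖ := norm_inner_le_norm _ _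
    _ = ‖x‖ := by rw [hu1 k, one_mul]
  refine le_antisymm ?_ (ciSup_le fun k => by
    calc ‖(inner ℂ (u k) x : ℂ)‖ ≤ ‖u k‖ * ‖x‖ := norm_inner_le_norm _ _
    _ = ‖x‖ := by rw [hu1 k, one_mul])
  rcases eq_or_ne x 0 with rfl | hx
  · simp only [norm_zero]
    calc (0:ℝ) ≤ ‖(inner ℂ (u 0) (0:H) : ℂ)‖ := norm_nonneg _
    _ ≤ ⨆ k, ‖(inner ℂ (u k) (0:H) : ℂ)‖ := le_ciSup hbdd 0
  · have hnx : (0:ℝ) < ‖x‖ := norm_pos_iff.2 hx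
    refine le_of_forall_pos_le_add fun ε hε => ?_
    set g : H := ((‖x‖⁻¹ : ℝ) : ℂ) • x with hg
    have hgnorm : ‖g‖ = 1 := by
      rw [hg, norm_smul]
      simp [abs_of_nonneg, inv_mul_cancel₀ hnx.ne']
    have hginner : ‖(inner ℂ g x : ℂ)‖ = ‖x‖ := by
      rw [hg, inner_smul_left, norm_mul, inner_self_eq_norm_sq_to_K]
      simp only [RCLike.norm_conj, norm_pow, Complex.norm_real, RCLike.norm_ofReal, abs_norm, norm_inv, norm_norm]
      field_simp
    obtain ⟨k, hk⟩ := hud g hgnorm (ε / ‖x‖) (by positivity)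
    have hdiff : ‖(inner ℂ g x : ℂ) - inner ℂ (u k) x‖ < ε := by
      calc ‖(inner ℂ g x : ℂ) - inner ℂ (u k) x‖ = ‖(inner ℂ (g - u k) x : ℂ)‖ := by
            rw [inner_sub_left]
      _ ≤ ‖g - u k‖ * ‖x‖ := norm_inner_le_norm _ _
      _ = ‖u k - g‖ * ‖x‖ := by rw [norm_sub_rev]
      _ < (ε / ‖x‖) * ‖x‖ := by
            exact mul_lt_mul_of_pos_right hk hnx
      _ = ε := by field_simp
    have h1 : ‖x‖ ≤ ‖(inner ℂ (u k) x : ℂ)‖ + ε := by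
      have := norm_sub_norm_le (inner ℂ g x : ℂ) (inner ℂ (u k) x)
      rw [hginner] at this
      linarith
    calc ‖x‖ ≤ ‖(inner ℂ (u k) x : ℂ)‖ + ε := h1
    _ ≤ (⨆ k, ‖(inner ℂ (u k) x : ℂ)‖) + ε := by
        have := le_ciSup hbdd k
        linarith

theorem measurable_nuf {Ω : Type*} [MeasurableSpace Ω]
    [MeasurableSpace H] [BorelSpace H] [SecondCountableTopology H]
    (u : ℕ → H) (hu1 : ∀ k, ‖u k‖ = 1)
    (hud : ∀ f : H, ‖f‖ = 1 → ∀ ε > 0, ∃ k, ‖u k - f‖ < ε)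
    (T : Ω → (H →L[ℂ] H)) (hT : ∀ f : H, Measurable fun ω => T ω f) (z : ℂ) :
    Measurable fun ω => nuf u (T ω) z := by
  have hmeasB : ∀ k : ℕ, Measurable fun ω => z • u k - T ω (u k) := fun k =>
    measurable_const.sub (hT (u k))
  have happ : ∀ (ω) (f : H), (algebraMap ℂ (H →L[ℂ] H) z - T ω) f = z • f - T ω f := by
    intro ω f
    rw [ContinuousLinearMap.sub_apply, algebraMap_apply']
  apply Measurable.min
  · have heq : (fun ω => lowNorm u (algebraMap ℂ (H →L[ℂ] H) z - T ω)) =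
        fun ω => ⨅ k, ‖z • u k - T ω (u k)‖ := by
      funext ω
      unfold lowNorm
      simp only [happ]
    rw [heq]
    exact Measurable.iInf fun k => (hmeasB k).norm
  · have heq : (fun ω => lowNorm u (star (algebraMap ℂ (H →L[ℂ] H) z - T ω))) =
        fun ω => ⨅ j, ⨆ k, ‖(inner ℂ (z • u k - T ω (u k)) (u j) : ℂ)‖ := by
      funext ω
      unfold lowNorm
      congr 1
      funext j
      rw [norm_eq_ciSup u hu1 hud]
      congr 1
      funext k
      rw [star_eq_adjoint, adjoint_inner_right, happ]
    rw [heq]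
    exact Measurable.iInf fun j =>
      Measurable.iSup fun k => ((hmeasB k).inner measurable_const).norm

theorem spectrum_inter_open_nonempty_iff [Nontrivial H] (u : ℕ → H)
    (hu1 : ∀ k, ‖u k‖ = 1)
    (hud : ∀ f : H, ‖f‖ = 1 → ∀ ε > 0, ∃ k, ‖u k - f‖ < ε)
    (A : H →L[ℂ] H) (U : Set ℂ) (hU : IsOpen U) (c : ℕ → ℂ) (hc : DenseRange c) :
    (spectrum ℂ A ∩ U).Nonempty ↔
      ∃ q : ℚ, 0 < q ∧ ∀ k : ℕ, ∃ j : ℕ,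
        ENNReal.ofReal (q : ℝ) < EMetric.infEdist (c j) Uᶜ ∧
        nuf u A (c j) < 1 / (k + 1) := by
  constructor
  · rintro ⟨w, hwσ, hwU⟩
    have hUc : IsClosed (Uᶜ) := hU.isClosed_compl
    set r := EMetric.infEdist w Uᶜ with hrdef
    have hrne : r ≠ 0 := by
      intro h0
      have : w ∈ closure (Uᶜ) := EMetric.mem_closure_iff_infEdist_zero.2 h0
      rw [hUc.closure_eq] at this
      exact this hwU
    set r' := min r 1 with hr'def
    have hr'ne : r' ≠ 0 := by
      simp only [hr'def, ne_eq, min_eq_iff]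
      rintro (⟨h1, -⟩ | ⟨h1, -⟩) <;> simp_all
    have hr'top : r' ≠ ⊤ := ne_top_of_le_ne_top ENNReal.one_ne_top (min_le_right _ _)
    have hr'pos : 0 < r'.toReal := ENNReal.toReal_pos hr'ne hr'top
    obtain ⟨q, hq0, hq3⟩ := exists_rat_btwn (show (0:ℝ) < r'.toReal / 3 by positivity)
    refine ⟨q, by exact_mod_cast hq0, fun k => ?_⟩
    have hδpos : (0:ℝ) < min (q : ℝ) (1 / (k + 1)) := by
      apply lt_min hq0
      positivity
    obtain ⟨j, hj⟩ := hc.exists_dist_lt w hδpos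
    have hjq : dist w (c j) < (q : ℝ) := lt_of_lt_of_le hj (min_le_left _ _)
    have hjk : dist w (c j) < 1 / (k + 1) := lt_of_lt_of_le hj (min_le_right _ _)
    refine ⟨j, ?_, ?_⟩
    · have he : edist (c j) w ≠ ⊤ := edist_ne_top _ _
      have hlt : edist (c j) w < ENNReal.ofReal (q : ℝ) := by
        rw [edist_dist, dist_comm]
        exact ENNReal.ofReal_lt_ofReal_iff hq0 |>.2 hjq
      have htri : r ≤ EMetric.infEdist (c j) Uᶜ + edist (c j) w := by
        calc r ≤ EMetric.infEdist (c j) Uᶜ + edist w (c j) :=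
          EMetric.infEdist_le_infEdist_add_edist
        _ = EMetric.infEdist (c j) Uᶜ + edist (c j) w := by rw [edist_comm]
      have hsum : ENNReal.ofReal (q : ℝ) + edist (c j) w < r := by
        calc ENNReal.ofReal (q : ℝ) + edist (c j) w
            < ENNReal.ofReal (q : ℝ) + ENNReal.ofReal (q : ℝ) :=
          ENNReal.add_lt_add_left (by simp) hlt
        _ = ENNReal.ofReal (2 * q) := by
            rw [← ENNReal.ofReal_add (by positivity) (by positivity)]
            ring_nf
        _ < ENNReal.ofReal r'.toReal := by
            rw [ENNReal.ofReal_lt_ofReal_iff hr'pos]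
            linarith
        _ = r' := ENNReal.ofReal_toReal hr'top
        _ ≤ r := min_le_left _ _
      have := lt_of_lt_of_le hsum htri
      exact lt_of_add_lt_add_right this
    · have hnw : nuf u A w = 0 := (nuf_eq_zero_iff u hu1 hud A w).2 hwσ
      calc nuf u A (c j) ≤ nuf u A w + dist (c j) w := nuf_lipschitz u hu1 A (c j) w
      _ = dist w (c j) := by rw [hnw, zero_add, dist_comm]
      _ < 1 / (k + 1) := hjk
  · rintro ⟨q, hq, hk⟩
    choose j hjq hjnu using hk
    set z : ℕ → ℂ := fun k => c (j k) with hz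
    have hq0 : (0:ℝ) < (q : ℝ) := by exact_mod_cast hq
    have hmem : ∀ k, z k ∈ Metric.closedBall (0 : ℂ) (‖A‖ + 1) := by
      intro k
      rw [Metric.mem_closedBall, dist_zero_right]
      have h1 := nuf_ge u hu1 A (z k)
      have h2 := hjnu k
      have h3 : (1:ℝ) / (k + 1) ≤ 1 := by
        rw [div_le_one (by positivity)]
        have : (0:ℝ) ≤ (k:ℝ) := Nat.cast_nonneg k
        linarith
      linarith
    obtain ⟨w, -, φ, hφ, hlim⟩ :=
      (isCompact_closedBall (0:ℂ) (‖A‖ + 1)).tendsto_subseq hmem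
    have hnw : nuf u A w = 0 := by
      refine le_antisymm ?_ (nuf_nonneg u A w)
      refine le_of_forall_pos_le_add fun ε hε => ?_
      obtain ⟨N1, hN1⟩ := (Metric.tendsto_atTop.1 hlim) (ε / 2) (by positivity)
      obtain ⟨M, hM⟩ := exists_nat_one_div_lt (show (0:ℝ) < ε / 2 by positivity)
      set n := max N1 M with hn
      have hd : dist (z (φ n)) w < ε / 2 := hN1 n (le_max_left _ _)
      have hmono : (1:ℝ) / (φ n + 1) ≤ 1 / (n + 1) := by
        apply one_div_le_one_div_of_le (by positivity)
        have h : n ≤ φ n := hφ.le_apply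
        exact_mod_cast Nat.add_le_add_right h 1
      have hsmall : (1:ℝ) / (n + 1) ≤ 1 / (M + 1) := by
        apply one_div_le_one_div_of_le (by positivity)
        have : (M:ℝ) ≤ (n:ℝ) := Nat.cast_le.2 (le_max_right _ _)
        linarith
      refine le_of_lt ?_
      calc nuf u A w ≤ nuf u A (z (φ n)) + dist w (z (φ n)) :=
        nuf_lipschitz u hu1 A w (z (φ n))
      _ < 1 / (φ n + 1) + ε / 2 := by
          rw [dist_comm]
          exact add_lt_add_of_lt_of_lt (hjnu (φ n)) hd
      _ < ε / 2 + ε / 2 := by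
          have : (1:ℝ) / (φ n + 1) < ε / 2 := lt_of_le_of_lt (hmono.trans hsmall) hM
          linarith
      _ = 0 + ε := by ring
    refine ⟨w, (nuf_eq_zero_iff u hu1 hud A w).1 hnw, ?_⟩
    by_contra hwU
    have hinf : ∀ k : ℕ, EMetric.infEdist (z k) Uᶜ ≤ edist (z k) w := fun k =>
      EMetric.infEdist_le_edist_of_mem hwU
    obtain ⟨N1, hN1⟩ := (Metric.tendsto_atTop.1 hlim) (q : ℝ) hq0
    have h1 : ENNReal.ofReal (q : ℝ) < edist (z (φ N1)) w :=
      lt_of_lt_of_le (hjq (φ N1)) (hinf (φ N1))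
    rw [edist_dist] at h1
    have h2 : (q : ℝ) < dist (z (φ N1)) w :=
      (ENNReal.ofReal_lt_ofReal_iff_of_nonneg (by positivity)).1 h1
    exact absurd (hN1 N1 le_rfl) (not_lt.2 h2.le)

end RandomSpectrumAux

open RandomSpectrumAux

/-- The spectrum of a random bounded operator is a random set: for a complete
σ-finite measure space, a separable complex Hilbert space `H`, and a random
bounded operator `T`, the event that `spectrum ℂ (T ω)` meets a given open set
`U ⊆ ℂ` is measurable. -/
theorem spectrum_of_random_bounded_operator_is_random_set
    {Ω : Type*} [MeasurableSpace Ω] (μ : Measure Ω) [SigmaFinite μ]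
    (hμ : μ.IsComplete)
    {H : Type*} [NormedAddCommGroup H] [InnerProductSpace ℂ H] [CompleteSpace H]
    [SecondCountableTopology H] [MeasurableSpace H] [BorelSpace H]
    (T : Ω → (H →L[ℂ] H)) (hT : ∀ f : H, Measurable fun ω => T ω f)
    (U : Set ℂ) (hU : IsOpen U) :
    MeasurableSet {ω : Ω | (spectrum ℂ (T ω) ∩ U).Nonempty} := by
  by_cases hH : Nontrivial H
  · haveI := hH
    obtain ⟨u, hu1, hud⟩ := exists_dense_sphere_seq (H := H)
    haveI : Nonempty ℂ := ⟨0⟩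
    set c : ℕ → ℂ := TopologicalSpace.denseSeq ℂ with hcdef
    have hc : DenseRange c := TopologicalSpace.denseRange_denseSeq ℂ
    have hset : {ω : Ω | (spectrum ℂ (T ω) ∩ U).Nonempty} =
        ⋃ (q : ℚ), ⋂ (k : ℕ), ⋃ (j : ℕ),
          {ω : Ω | (0 < q ∧ ENNReal.ofReal (q : ℝ) < EMetric.infEdist (c j) Uᶜ) ∧
            nuf u (T ω) (c j) < 1 / (k + 1)} := by
      ext ω
      simp only [Set.mem_setOf_eq, Set.mem_iUnion, Set.mem_iInter]
      rw [spectrum_inter_open_nonempty_iff u hu1 hud (T ω) U hU c hc]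
      constructor
      · rintro ⟨q, hq, h⟩
        exact ⟨q, fun k => (h k).imp fun j hj => ⟨⟨hq, hj.1⟩, hj.2⟩⟩
      · rintro ⟨q, h⟩
        obtain ⟨j0, ⟨hq, -⟩, -⟩ := h 0
        exact ⟨q, hq, fun k => (h k).imp fun j hj => ⟨hj.1.2, hj.2⟩⟩
    rw [hset]
    refine MeasurableSet.iUnion fun q => MeasurableSet.iInter fun k =>
      MeasurableSet.iUnion fun j => ?_
    by_cases hp : 0 < q ∧ ENNReal.ofReal (q : ℝ) < EMetric.infEdist (c j) Uᶜ
    · have heq : {ω : Ω | (0 < q ∧ ENNReal.ofReal (q : ℝ) < EMetric.infEdist (c j) Uᶜ) ∧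
          nuf u (T ω) (c j) < 1 / (k + 1)} =
          {ω : Ω | nuf u (T ω) (c j) < 1 / (k + 1)} := by
        ext ω
        simp only [Set.mem_setOf_eq, hp, true_and]
      rw [heq]
      exact measurableSet_lt (measurable_nuf u hu1 hud T hT (c j)) measurable_const
    · have heq : {ω : Ω | (0 < q ∧ ENNReal.ofReal (q : ℝ) < EMetric.infEdist (c j) Uᶜ) ∧
          nuf u (T ω) (c j) < 1 / (k + 1)} = ∅ :=
        Set.eq_empty_iff_forall_notMem.2 fun ω h => hp h.1
      rw [heq]
      exact MeasurableSet.empty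
  · haveI : Subsingleton H := not_nontrivial_iff_subsingleton.1 hH
    haveI : Subsingleton (H →L[ℂ] H) :=
      ⟨fun a b => ContinuousLinearMap.ext fun f => Subsingleton.elim _ _⟩
    have hempty : {ω : Ω | (spectrum ℂ (T ω) ∩ U).Nonempty} = ∅ := by
      refine Set.eq_empty_iff_forall_notMem.2 fun ω h => ?_
      obtain ⟨w, hw, -⟩ := h
      exact (spectrum.mem_iff.1 hw) (isUnit_of_subsingleton _)
    rw [hempty]
    exact MeasurableSet.empty
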